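/- The uncentered forward-in-time parabolic maximal operator M^+ is of weak type (1,1): there exists a constant c = c(n,p) (one may take c = 2·5^{n+p}) such that for every f ∈ L^1(ℝ^{n+1}) and every λ > 0, the Lebesgue measure of the set {(x,t) ∈ ℝ^{n+1} : M^+f(x,t) > λ} is at most (c/λ) ∫_{ℝ^{n+1}} |f|. -/

import Mathlib

open MeasureTheory Set ENNReal
open scoped NNReal

noncomputable section

/-- The spatial cube `Q(x,L)` with center `x` and side length `L`. -/
def parQ (n : ℕ) (x : Fin n → ℝ) (L : ℝ) : Set (Fin n → ℝ) :=
  {y | ∀ i, |y i - x i| ≤ L / 2}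

/-- Lower part `R^-(γ)` of the parabolic rectangle `R(x,t,L)`. -/
def pMinus (n : ℕ) (p γ : ℝ) (x : Fin n → ℝ) (t L : ℝ) : Set ((Fin n → ℝ) × ℝ) :=
  (parQ n x L) ×ˢ Set.Ioo (t - L ^ p) (t - γ * L ^ p)

/-- Upper part `R^+(γ)` of the parabolic rectangle `R(x,t,L)`. -/
def pPlus (n : ℕ) (p γ : ℝ) (x : Fin n → ℝ) (t L : ℝ) : Set ((Fin n → ℝ) × ℝ) :=
  (parQ n x L) ×ˢ Set.Ioo (t + γ * L ^ p) (t + L ^ p)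

/-- The full parabolic rectangle `R(x,t,L)`. -/
def pRect (n : ℕ) (p : ℝ) (x : Fin n → ℝ) (t L : ℝ) : Set ((Fin n → ℝ) × ℝ) :=
  (parQ n x L) ×ˢ Set.Ioo (t - L ^ p) (t + L ^ p)

/-- A weight: a nonnegative locally integrable function on `ℝ^{n+1}`. -/
def IsWeight (n : ℕ) (w : (Fin n → ℝ) × ℝ → ℝ) : Prop :=
  (∀ z, 0 ≤ w z) ∧ MeasureTheory.LocallyIntegrable w volume

/-- The uncentered forward-in-time parabolic maximal function. -/
def Mplus (n : ℕ) (p : ℝ) (f : (Fin n → ℝ) × ℝ → ℝ) (z : (Fin n → ℝ) × ℝ) : ℝ≥0∞ :=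
  ⨆ (x : Fin n → ℝ) (t : ℝ) (L : ℝ) (_ : 0 < L) (_ : z ∈ pMinus n p 0 x t L),
    ENNReal.ofReal (⨍ y in pPlus n p 0 x t L, |f y|)

lemma parQ_eq (n : ℕ) (x : Fin n → ℝ) (L : ℝ) :
    parQ n x L = Set.pi Set.univ (fun i => Set.Icc (x i - L/2) (x i + L/2)) := by
  ext y
  simp only [parQ, mem_setOf_eq, Set.mem_pi, Set.mem_univ, forall_true_left, Set.mem_Icc]
  constructor <;> intro h i <;> have hi := h i
  · rw [abs_le] at hi; constructor <;> linarith [hi.1, hi.2]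
  · rw [abs_le]; constructor <;> linarith [hi.1, hi.2]

lemma parQ_meas (n : ℕ) (x : Fin n → ℝ) (L : ℝ) : MeasurableSet (parQ n x L) := by
  rw [parQ_eq]; exact MeasurableSet.univ_pi fun i => measurableSet_Icc

lemma parQ_vol (n : ℕ) (x : Fin n → ℝ) (L : ℝ) :
    volume (parQ n x L) = ENNReal.ofReal L ^ n := by
  rw [parQ_eq, volume_pi_pi]
  have : ∀ i : Fin n, volume (Set.Icc (x i - L/2) (x i + L/2)) = ENNReal.ofReal L := by
    intro i; rw [Real.volume_Icc]; ring_nf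
  simp [this, Finset.prod_const]

lemma aux525 {p : ℝ} (hp : 1 ≤ p) : 2 * (2:ℝ)^p + 1 ≤ 5^p := by
  have h1 : ((2:ℝ≥0))^p + (1:ℝ≥0)^p ≤ ((2:ℝ≥0) + 1)^p := NNReal.add_rpow_le_rpow_add 2 1 hp
  have h2 : ((2:ℝ≥0))^p + (3:ℝ≥0)^p ≤ ((2:ℝ≥0) + 3)^p := NNReal.add_rpow_le_rpow_add 2 3 hp
  have c1 : (2:ℝ)^p + (1:ℝ)^p ≤ 3^p := by
    have := h1
    rw [show (2:ℝ≥0) + 1 = 3 by norm_num] at this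
    exact_mod_cast this
  have c2 : (2:ℝ)^p + (3:ℝ)^p ≤ 5^p := by
    have := h2
    rw [show (2:ℝ≥0) + 3 = 5 by norm_num] at this
    exact_mod_cast this
  rw [Real.one_rpow] at c1
  linarith


lemma pPlus_meas (n : ℕ) (p γ : ℝ) (x : Fin n → ℝ) (t L : ℝ) :
    MeasurableSet (pPlus n p γ x t L) :=
  (parQ_meas n x L).prod measurableSet_Ioo

lemma pPlus_vol (n : ℕ) (p : ℝ) (x : Fin n → ℝ) (t L : ℝ) :
    volume (pPlus n p 0 x t L) = ENNReal.ofReal L ^ n * ENNReal.ofReal (L ^ p) := by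
  rw [pPlus, Measure.volume_eq_prod, Measure.prod_prod, parQ_vol, Real.volume_Ioo]
  congr 1
  ring_nf

lemma pRect_vol (n : ℕ) (p : ℝ) (x : Fin n → ℝ) (t L : ℝ) :
    volume (pRect n p x t L) = ENNReal.ofReal L ^ n * ENNReal.ofReal (2 * L ^ p) := by
  rw [pRect, Measure.volume_eq_prod, Measure.prod_prod, parQ_vol, Real.volume_Ioo]
  congr 1
  ring_nf

lemma pRect5_vol (n : ℕ) (p : ℝ) (hp : 1 < p) (x : Fin n → ℝ) (t L : ℝ) (hL : 0 < L) :
    volume (pRect n p x t (5 * L)) =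
      ENNReal.ofReal (2 * 5 ^ ((n : ℝ) + p)) * volume (pPlus n p 0 x t L) := by
  rw [pRect_vol, pPlus_vol]
  have h5 : (5 * L) ^ p = 5 ^ p * L ^ p := Real.mul_rpow (by norm_num) hL.le
  have hnp : (5:ℝ) ^ ((n:ℝ) + p) = 5 ^ (n:ℕ) * 5 ^ p := by
    rw [Real.rpow_add (by norm_num), Real.rpow_natCast]
  rw [h5, hnp]
  rw [← ENNReal.ofReal_pow (by positivity : (0:ℝ) ≤ 5 * L), ← ENNReal.ofReal_pow hL.le,
    ← ENNReal.ofReal_mul (by positivity), ← ENNReal.ofReal_mul (by positivity),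
    ← ENNReal.ofReal_mul (by positivity)]
  congr 1
  ring

lemma rect_subset_enlarged {n : ℕ} {p : ℝ} (hp : 1 ≤ p) {x x' : Fin n → ℝ} {t t' L L' : ℝ}
    (hL : 0 < L) (hL' : 0 < L')
    (hne : (pRect n p x t L ∩ pRect n p x' t' L').Nonempty) (hle : L ≤ 2 * L') :
    pRect n p x t L ⊆ pRect n p x' t' (5 * L') := by
  obtain ⟨w, hw1, hw2⟩ := hne
  obtain ⟨hw1Q, hw1T⟩ := hw1
  obtain ⟨hw2Q, hw2T⟩ := hw2
  have hLp : L ^ p ≤ 2 ^ p * L' ^ p := by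
    calc L ^ p ≤ (2 * L') ^ p := Real.rpow_le_rpow hL.le hle (by linarith)
    _ = 2 ^ p * L' ^ p := Real.mul_rpow (by norm_num) hL'.le
  have h5p : (5 * L') ^ p = 5 ^ p * L' ^ p := Real.mul_rpow (by norm_num) hL'.le
  have h525 := aux525 hp
  have hL'p : 0 < L' ^ p := Real.rpow_pos_of_pos hL' p
  rintro ⟨y, s⟩ ⟨hyQ, hyT⟩
  constructor
  · intro i
    have h1 := abs_le.1 (hyQ i)
    have h2 := abs_le.1 (hw1Q i)
    have h3 := abs_le.1 (hw2Q i)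
    rw [abs_le]
    constructor <;> · simp only [neg_le, neg_sub] at *; nlinarith [h1.1, h1.2, h2.1, h2.2, h3.1, h3.2]
  · simp only [Set.mem_Ioo] at hyT hw1T hw2T ⊢
    rw [h5p]
    constructor <;> nlinarith [hyT.1, hyT.2, hw1T.1, hw1T.2, hw2T.1, hw2T.2, hLp, hL'p]



lemma pMinus_subset_pRect {n : ℕ} {p : ℝ} {x : Fin n → ℝ} {t L : ℝ} (hL : 0 < L) (hp : 0 < p) :
    pMinus n p 0 x t L ⊆ pRect n p x t L := by
  rintro ⟨y, s⟩ ⟨h1, h2⟩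
  simp only [Set.mem_Ioo, zero_mul, sub_zero] at h2
  exact ⟨h1, h2.1, h2.2.trans (by nlinarith [Real.rpow_pos_of_pos hL p])⟩

lemma pPlus_subset_pRect {n : ℕ} {p : ℝ} {x : Fin n → ℝ} {t L : ℝ} (hL : 0 < L) (hp : 0 < p) :
    pPlus n p 0 x t L ⊆ pRect n p x t L := by
  rintro ⟨y, s⟩ ⟨h1, h2⟩
  simp only [Set.mem_Ioo, zero_mul, add_zero] at h2
  exact ⟨h1, (by nlinarith [Real.rpow_pos_of_pos hL p] : t - L ^ p < s), h2.2⟩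

lemma pPlus_vol_pos {n : ℕ} {p : ℝ} {x : Fin n → ℝ} {t L : ℝ} (hL : 0 < L) :
    0 < volume (pPlus n p 0 x t L) := by
  rw [pPlus_vol]
  have h1 : (0:ℝ≥0∞) < ENNReal.ofReal L := ENNReal.ofReal_pos.2 hL
  have h2 : (0:ℝ≥0∞) < ENNReal.ofReal (L ^ p) :=
    ENNReal.ofReal_pos.2 (Real.rpow_pos_of_pos hL p)
  exact ENNReal.mul_pos (ENNReal.pow_ne_zero h1.ne' n) h2.ne'

lemma pPlus_vol_ne_top {n : ℕ} {p : ℝ} {x : Fin n → ℝ} {t L : ℝ} :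
    volume (pPlus n p 0 x t L) ≠ ⊤ := by
  rw [pPlus_vol]
  exact ENNReal.mul_ne_top (ENNReal.pow_ne_top ENNReal.ofReal_ne_top) ENNReal.ofReal_ne_top

lemma pPlus_vol_toReal {n : ℕ} {p : ℝ} {x : Fin n → ℝ} {t L : ℝ} (hL : 0 < L) :
    (volume (pPlus n p 0 x t L)).toReal = L ^ n * L ^ p := by
  rw [pPlus_vol, ENNReal.toReal_mul, ENNReal.toReal_pow, ENNReal.toReal_ofReal hL.le,
    ENNReal.toReal_ofReal (Real.rpow_pos_of_pos hL p).le]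

set_option maxHeartbeats 1000000 in
/-- The parabolic maximal operator `M^+` is of weak type `(1,1)`. -/
theorem stmt_10 (n : ℕ) (p : ℝ) (hp : 1 < p) :
    ∃ c > (0 : ℝ), ∀ f : (Fin n → ℝ) × ℝ → ℝ, MeasureTheory.Integrable f volume →
      ∀ lam : ℝ, 0 < lam →
        volume {z | ENNReal.ofReal lam < Mplus n p f z} ≤
          ENNReal.ofReal ((c / lam) * ∫ z, |f z|) := by
  have hp1 : (1:ℝ) ≤ p := hp.le
  have hp0 : (0:ℝ) < p := by linarith
  refine ⟨2 * 5 ^ ((n : ℝ) + p), by positivity, ?_⟩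
  intro f hf lam hlam
  set c : ℝ := 2 * 5 ^ ((n : ℝ) + p) with hcdef
  have hc : 0 < c := by positivity
  set S := {z : (Fin n → ℝ) × ℝ | ENNReal.ofReal lam < Mplus n p f z} with hS
  have hInt : Integrable (fun z => |f z|) volume := hf.abs
  set Itot : ℝ := ∫ z, |f z| with hItotdef
  have hItot0 : 0 ≤ Itot := integral_nonneg fun z => abs_nonneg _
  -- extract data
  have key : ∀ z : ↥S, ∃ x t L, 0 < L ∧ (z : (Fin n → ℝ) × ℝ) ∈ pMinus n p 0 x t L ∧
      lam < ⨍ y in pPlus n p 0 x t L, |f y| := by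
    rintro ⟨z, hz⟩
    simp only [hS, mem_setOf_eq, Mplus, lt_iSup_iff] at hz
    obtain ⟨x, t, L, hL, hmem, hlt⟩ := hz
    exact ⟨x, t, L, hL, hmem, (ENNReal.ofReal_lt_ofReal_iff_of_nonneg hlam.le).1 hlt⟩
  choose xc tc Lc hLc hmemc havgc using key
  clear_value S c Itot
  clear hS
  set A : ↥S → Set ((Fin n → ℝ) × ℝ) := fun a => pPlus n p 0 (xc a) (tc a) (Lc a) with hA
  set B : ↥S → Set ((Fin n → ℝ) × ℝ) := fun a => pRect n p (xc a) (tc a) (Lc a) with hB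
  have hAmeas : ∀ a, MeasurableSet (A a) := fun a => pPlus_meas n p 0 _ _ _
  have hAsubB : ∀ a, A a ⊆ B a := fun a => pPlus_subset_pRect (hLc a) hp0
  have hBmem : ∀ a : ↥S, (a : (Fin n → ℝ) × ℝ) ∈ B a :=
    fun a => pMinus_subset_pRect (hLc a) hp0 (hmemc a)
  -- real-average inequality
  have havg' : ∀ a, lam * (volume (A a)).toReal ≤ ∫ y in A a, |f y| := by
    intro a
    have h := havgc a
    rw [setAverage_eq, smul_eq_mul] at h
    have hV : 0 < (volume (A a)).toReal :=
      ENNReal.toReal_pos (pPlus_vol_pos (hLc a)).ne' pPlus_vol_ne_top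
    have h' : lam < (volume (A a)).toReal⁻¹ * ∫ y in A a, |f y| := h
    have hVI : (volume (A a)).toReal * (volume (A a)).toReal⁻¹ = 1 :=
      mul_inv_cancel₀ (ne_of_gt hV)
    have h2 := mul_lt_mul_of_pos_left h' hV
    rw [← mul_assoc, hVI, one_mul] at h2
    linarith
  have hsetle : ∀ a, ∫ y in A a, |f y| ≤ Itot := by
    intro a
    rw [hItotdef]
    exact setIntegral_le_integral hInt (Filter.Eventually.of_forall fun y => abs_nonneg _)
  -- lintegral inequality
  have hlin : ∀ a, ENNReal.ofReal lam * volume (A a) ≤ ∫⁻ y in A a, ENNReal.ofReal |f y| := by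
    intro a
    have h1 : ENNReal.ofReal (lam * (volume (A a)).toReal) ≤
        ENNReal.ofReal (∫ y in A a, |f y|) := ENNReal.ofReal_le_ofReal (havg' a)
    rw [ENNReal.ofReal_mul hlam.le, ENNReal.ofReal_toReal pPlus_vol_ne_top] at h1
    rwa [ofReal_integral_eq_lintegral_ofReal hInt.integrableOn
      (Filter.Eventually.of_forall fun y => abs_nonneg _)] at h1
  -- L bound
  have hLb : ∀ a, Lc a ≤ max 1 (Itot / lam) := by
    intro a
    have h1 : lam * (Lc a ^ n * Lc a ^ p) ≤ Itot := by
      have := (havg' a).trans (hsetle a)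
      rwa [hA, pPlus_vol_toReal (hLc a)] at this
    rcases le_or_gt (Lc a) 1 with hone | hone
    · exact hone.trans (le_max_left _ _)
    · have e1 : (1:ℝ) ≤ Lc a ^ n := one_le_pow₀ hone.le
      have e2 : Lc a ≤ Lc a ^ p := by
        calc Lc a = Lc a ^ (1:ℝ) := (Real.rpow_one _).symm
        _ ≤ Lc a ^ p := Real.rpow_le_rpow_of_exponent_le hone.le hp1
      have e3 : 0 < Lc a ^ p := Real.rpow_pos_of_pos (hLc a) p
      have e4 : Lc a ≤ Lc a ^ n * Lc a ^ p := by
        nlinarith [mul_nonneg (sub_nonneg.2 e1) e3.le, e2]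
      have h2 : Lc a ≤ Itot / lam := by
        rw [le_div_iff₀ hlam]
        nlinarith [mul_le_mul_of_nonneg_left e4 hlam.le, h1]
      exact h2.trans (le_max_right _ _)
  -- Vitali
  obtain ⟨u, -, hdisj, hcov⟩ :=
    Vitali.exists_disjoint_subfamily_covering_enlargement B Set.univ Lc 2 one_lt_two
      (fun a _ => (hLc a).le) (max 1 (Itot / lam)) (fun a _ => hLb a)
      (fun a _ => ⟨(a : (Fin n → ℝ) × ℝ), hBmem a⟩)
  -- covering of S by enlarged rectangles
  have hSsub : S ⊆ ⋃ b ∈ u, pRect n p (xc b) (tc b) (5 * Lc b) := by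
    intro z hz
    obtain ⟨b, hb, hneB, hle⟩ := hcov ⟨z, hz⟩ (Set.mem_univ _)
    have hsub : B ⟨z, hz⟩ ⊆ pRect n p (xc b) (tc b) (5 * Lc b) :=
      rect_subset_enlarged hp1 (hLc _) (hLc b) hneB hle
    exact Set.mem_biUnion hb (hsub (hBmem ⟨z, hz⟩))
  -- pairwise disjointness of the A's over u
  have hdisjA : Pairwise (Function.onFun Disjoint fun b : ↥u => A b.1) := by
    intro b b' hbb'
    have : b.1 ≠ b'.1 := fun h => hbb' (Subtype.ext h)
    exact ((hdisj b.2 b'.2 this).mono (hAsubB b.1) (hAsubB b'.1))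
  -- countability of u
  have hcount : u.Countable := by
    have hposc := MeasureTheory.Measure.countable_meas_pos_of_disjoint_iUnion
      (μ := volume) (fun b : ↥u => hAmeas b.1) hdisjA
    have huniv : {i : ↥u | 0 < volume (A i.1)} = Set.univ :=
      Set.eq_univ_of_forall fun b => pPlus_vol_pos (hLc b.1)
    rw [huniv, Set.countable_univ_iff] at hposc
    exact Set.countable_coe_iff.mp hposc
    -- direction check
  haveI : Countable ↥u := hcount.to_subtype
  -- summation bound
  set Il : ℝ≥0∞ := ∫⁻ z, ENNReal.ofReal |f z| with hIl
  have hIleq : ENNReal.ofReal Itot = Il := by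
    rw [hItotdef, hIl]
    exact ofReal_integral_eq_lintegral_ofReal hInt (Filter.Eventually.of_forall fun z => abs_nonneg _)
  have hsum : ∑' b : ↥u, volume (A b.1) ≤ Il / ENNReal.ofReal lam := by
    rw [ENNReal.le_div_iff_mul_le (Or.inl (ENNReal.ofReal_pos.2 hlam).ne')
      (Or.inl ENNReal.ofReal_ne_top)]
    calc (∑' b : ↥u, volume (A b.1)) * ENNReal.ofReal lam
        = ∑' b : ↥u, ENNReal.ofReal lam * volume (A b.1) := by
          rw [← ENNReal.tsum_mul_right]; congr 1; ext b; rw [mul_comm]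
      _ ≤ ∑' b : ↥u, ∫⁻ y in A b.1, ENNReal.ofReal |f y| :=
          ENNReal.tsum_le_tsum fun b => hlin b.1
      _ = ∫⁻ y in ⋃ b : ↥u, A b.1, ENNReal.ofReal |f y| := by
          rw [lintegral_iUnion (s := fun b : ↥u => A b.1) (fun b => hAmeas b.1) hdisjA]
      _ ≤ ∫⁻ y, ENNReal.ofReal |f y| := setLIntegral_le_lintegral _ _
  -- final chain
  calc volume S ≤ volume (⋃ b ∈ u, pRect n p (xc b) (tc b) (5 * Lc b)) := measure_mono hSsub
    _ ≤ ∑' b : ↥u, volume (pRect n p (xc b.1) (tc b.1) (5 * Lc b.1)) :=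
        measure_biUnion_le volume hcount _
    _ = ∑' b : ↥u, ENNReal.ofReal c * volume (A b.1) := by
        refine tsum_congr fun b => ?_
        rw [pRect5_vol n p hp (xc b.1) (tc b.1) (Lc b.1) (hLc b.1), ← hcdef]
    _ = ENNReal.ofReal c * ∑' b : ↥u, volume (A b.1) := ENNReal.tsum_mul_left
    _ ≤ ENNReal.ofReal c * (Il / ENNReal.ofReal lam) := by gcongr
    _ = ENNReal.ofReal ((c / lam) * Itot) := by
        rw [ENNReal.ofReal_mul (by positivity : (0:ℝ) ≤ c / lam),
          ENNReal.ofReal_div_of_pos hlam, hIleq, div_eq_mul_inv, div_eq_mul_inv]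
        ring
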